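/- Let 0<γ<1, a>0, r>0, K>0. Set A = (a²/2)·γ/(1−γ)² and φ(y) = ((1−γ)/γ)y^{γ/(γ−1)} + Ky. Define W(y,t) = e^{A(T−t)}·φ(y) for 0<y and 0≤t≤T. Then −∂_tW − (a²/2)y²∂_{yy}W + rW ≥ 0 for all y > 0 and 0 ≤ t ≤ T. -/

import Mathlib

theorem stmt_10 (γ K a r T : ℝ) (hγ : 0 < γ) (hγ1 : γ < 1) (hK : 0 < K)
    (ha : 0 < a) (hr : 0 < r) (hT : 0 < T) :
    let A : ℝ := (a ^ 2 / 2) * γ / (1 - γ) ^ 2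
    let φ : ℝ → ℝ := fun y => ((1 - γ) / γ) * y ^ (γ / (γ - 1)) + K * y
    let W : ℝ → ℝ → ℝ := fun y t => Real.exp (A * (T - t)) * φ y
    ∀ y t : ℝ, 0 < y → 0 ≤ t → t ≤ T →
      -(deriv (fun s => W y s) t)
          - (a ^ 2 / 2) * y ^ 2 * deriv (deriv (fun z => W z t)) y
          + r * W y t ≥ 0 := by
  intro A φ W y t hy ht htT
  have hγ0 : γ ≠ 0 := ne_of_gt hγ
  have h1γ : (0:ℝ) < 1 - γ := by linarith
  have hγ1' : γ - 1 ≠ 0 := by intro h; linarith [sub_eq_zero.mp h]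
  set p : ℝ := γ / (γ - 1) with hp
  set c : ℝ := (1 - γ) / γ with hc
  set E : ℝ := Real.exp (A * (T - t)) with hE
  have hEpos : 0 < E := Real.exp_pos _
  -- time derivative
  have hdt : deriv (fun s => W y s) t = E * (-A) * φ y := by
    have h : HasDerivAt (fun s : ℝ => A * (T - s)) (A * (-1)) t :=
      ((hasDerivAt_id t).const_sub T).const_mul A
    have h2 := (h.exp).mul_const (φ y)
    have h3 : deriv (fun s => W y s) t = Real.exp (A * (T - t)) * (A * -1) * φ y := h2.deriv
    rw [h3, ← hE]; ring
  -- first space derivative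
  have hd1 : ∀ z : ℝ, 0 < z →
      HasDerivAt (fun z => W z t) (E * (c * (p * z ^ (p - 1)) + K)) z := by
    intro z hz
    have hrp : HasDerivAt (fun x : ℝ => x ^ p) (p * z ^ (p - 1)) z :=
      Real.hasDerivAt_rpow_const (Or.inl hz.ne')
    have h4 : HasDerivAt (fun x : ℝ => c * x ^ p + K * x)
        (c * (p * z ^ (p - 1)) + K) z := by
      exact ((hrp.const_mul c).add ((hasDerivAt_id' z).const_mul K)).congr_deriv (by ring)
    simpa [W, φ, E, hp, hc] using h4.const_mul E
  -- second space derivative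
  have heq : deriv (fun z => W z t) =ᶠ[nhds y]
      (fun z => E * (c * (p * z ^ (p - 1)) + K)) := by
    filter_upwards [isOpen_Ioi.mem_nhds hy] with z hz
    exact (hd1 z hz).deriv
  have hdd : deriv (deriv (fun z => W z t)) y
      = E * (c * (p * ((p - 1) * y ^ (p - 2)))) := by
    rw [heq.deriv_eq]
    have hrp : HasDerivAt (fun x : ℝ => x ^ (p - 1)) ((p - 1) * y ^ (p - 1 - 1)) y :=
      Real.hasDerivAt_rpow_const (Or.inl hy.ne')
    have h5 : HasDerivAt (fun z : ℝ => E * (c * (p * z ^ (p - 1)) + K))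
        (E * (c * (p * ((p - 1) * y ^ (p - 2))))) y := by
      have hsub : p - 1 - 1 = p - 2 := by ring
      rw [hsub] at hrp
      exact (((hrp.const_mul p).const_mul c).add_const K).const_mul E
    exact h5.deriv
  rw [hdt, hdd]
  have hyp2 : (y : ℝ) ^ (2 : ℕ) * y ^ (p - 2) = y ^ p := by
    rw [← Real.rpow_natCast y 2, ← Real.rpow_add hy]
    norm_num
  have hcpp : c * (p * (p - 1)) = 1 / (1 - γ) := by
    rw [hc, hp]; field_simp; ring
  have hAc : A * c = (a ^ 2 / 2) / (1 - γ) := by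
    show (a ^ 2 / 2) * γ / (1 - γ) ^ 2 * ((1 - γ) / γ) = (a ^ 2 / 2) / (1 - γ)
    field_simp
  have hyppos : 0 < y ^ p := Real.rpow_pos_of_pos hy p
  have hφ : 0 < φ y := by
    have : φ y = c * y ^ p + K * y := rfl
    rw [this]
    have hcpos : 0 < c := div_pos h1γ hγ
    positivity
  have hA : 0 < A := by
    show 0 < (a ^ 2 / 2) * γ / (1 - γ) ^ 2
    positivity
  have key : -(E * -A * φ y) - a ^ 2 / 2 * y ^ 2 * (E * (c * (p * ((p - 1) * y ^ (p - 2))))) + r * W y t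
      = E * (A * K * y + r * φ y) := by
    have hW : W y t = E * φ y := rfl
    have hφy : φ y = c * y ^ p + K * y := rfl
    rw [hW, hφy]
    have e1 : a ^ 2 / 2 * y ^ 2 * (E * (c * (p * ((p - 1) * y ^ (p - 2)))))
        = a ^ 2 / 2 * E * (c * (p * (p - 1))) * (y ^ (2:ℕ) * y ^ (p - 2)) := by ring
    rw [e1, hyp2, hcpp]
    have e2 : -(E * -A * (c * y ^ p + K * y)) = E * A * c * y ^ p + E * A * K * y := by ring
    rw [e2]
    linear_combination E * y ^ p * hAc
  rw [key]
  have : 0 < E * (A * K * y + r * (φ y)) := by positivity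
  linarith
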